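/- Let μ be a translation-invariant and reflection-invariant probability measure on {0,?,1}^ℤ. Then μ(?) + μ(0?) + μ(00?) ≥ μ({0,?}⟨***⟩) + 2μ(1⟨***⟩) - μ(100?) + μ(1?) + 2μ(1?01) + μ(1??1), where ⟨***⟩ denotes three consecutive coordinates in {0,?}³ \ {(0,0,0)}, μ({0,?}⟨***⟩) is the probability that one coordinate lies in {0,?} and the next three form a ⟨***⟩-event, and concatenated strings denote cylinder events. -/

import Mathlib

open MeasureTheory

inductive PSym : Type
  | zero : PSym
  | quest : PSym
  | one : PSym
deriving DecidableEq

instance : Fintype PSym :=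
  ⟨{PSym.zero, PSym.quest, PSym.one}, fun x => by cases x <;> simp⟩

instance : MeasurableSpace PSym := ⊤

abbrev Config : Type := ℤ → PSym

open PSym

/-- the symbol lies in `{0, ?}` -/
def lowQ (a : PSym) : Prop := a = PSym.zero ∨ a = PSym.quest

instance : DecidablePred lowQ := fun a => by unfold lowQ; infer_instance

/-- the window `(η k, η (k+1))` lies in `{0,?}² \ {(0,0)}` -/
def star2 (η : Config) (k : ℤ) : Prop :=
  lowQ (η k) ∧ lowQ (η (k + 1)) ∧ ¬(η k = PSym.zero ∧ η (k + 1) = PSym.zero)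

/-- the window `(η k, η (k+1), η (k+2))` lies in `{0,?}³ \ {(0,0,0)}` -/
def star3 (η : Config) (k : ℤ) : Prop :=
  lowQ (η k) ∧ lowQ (η (k + 1)) ∧ lowQ (η (k + 2)) ∧
    ¬(η k = PSym.zero ∧ η (k + 1) = PSym.zero ∧ η (k + 2) = PSym.zero)

/-- translation by `k` -/
def shiftBy (k : ℤ) (η : Config) : Config := fun n => η (n + k)

/-- reflection -/
def reflect (η : Config) : Config := fun n => η (-n)

-- auxiliary material
abbrev W : Type := PSym × PSym × PSym × PSym

instance : MeasurableSingletonClass PSym := ⟨fun _ => MeasurableSpace.measurableSet_top⟩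

def revW (w : W) : W := (w.2.2.2, w.2.2.1, w.2.1, w.1)

lemma revW_inv : Function.Involutive revW := fun ⟨_,_,_,_⟩ => rfl

def cyl (w : W) : Set Config :=
  {η | η 0 = w.1 ∧ η 1 = w.2.1 ∧ η 2 = w.2.2.1 ∧ η 3 = w.2.2.2}

lemma measurable_window : Measurable (fun η : Config => ((η 0, η 1, η 2, η 3) : W)) := by
  fun_prop

lemma measSet (Q : W → Prop) : MeasurableSet {η : Config | Q (η 0, η 1, η 2, η 3)} :=
  measurable_window ((Set.to_countable {w : W | Q w}).measurableSet)

lemma meas_cyl (w : W) : MeasurableSet (cyl w) :=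
  measSet (fun v => v.1 = w.1 ∧ v.2.1 = w.2.1 ∧ v.2.2.1 = w.2.2.1 ∧ v.2.2.2 = w.2.2.2)

lemma meas_decomp (μ : Measure Config) [IsProbabilityMeasure μ]
    (Q : W → Prop) [DecidablePred Q] :
    (μ {η : Config | Q (η 0, η 1, η 2, η 3)}).toReal
      = ∑ w : W, if Q w then (μ (cyl w)).toReal else 0 := by
  have hset : {η : Config | Q (η 0, η 1, η 2, η 3)}
      = ⋃ w ∈ Finset.univ.filter Q, cyl w := by
    ext η
    simp only [Set.mem_setOf_eq, Set.mem_iUnion, Finset.mem_filter, Finset.mem_univ, true_and]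
    constructor
    · intro h
      exact ⟨(η 0, η 1, η 2, η 3), h, rfl, rfl, rfl, rfl⟩
    · rintro ⟨⟨a, b, c, d⟩, hw, h0, h1, h2, h3⟩
      simp only [cyl] at h0 h1 h2 h3
      subst h0; subst h1; subst h2; subst h3
      exact hw
  rw [hset, measure_biUnion_finset ?_ (fun w _ => meas_cyl w)]
  · rw [ENNReal.toReal_sum (fun w _ => measure_ne_top μ _), Finset.sum_filter]
  · intro w _ w' _ hne
    rw [Function.onFun, Set.disjoint_left]
    rintro η ⟨h0, h1, h2, h3⟩ ⟨g0, g1, g2, g3⟩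
    apply hne
    calc w = (η 0, η 1, η 2, η 3) := by rw [h0, h1, h2, h3]
      _ = w' := by rw [g0, g1, g2, g3]

def fZ (w : W) : ℤ :=
  (if w.2.1 = quest then 1 else 0)
  + (if w.2.1 = zero ∧ w.2.2.1 = quest then 1 else 0)
  + (if w.2.1 = zero ∧ w.2.2.1 = zero ∧ w.2.2.2 = quest then 1 else 0)

def gZ (w : W) : ℤ :=
  (if lowQ w.1 ∧ lowQ w.2.1 ∧ lowQ w.2.2.1 ∧ lowQ w.2.2.2 ∧
      ¬(w.2.1 = zero ∧ w.2.2.1 = zero ∧ w.2.2.2 = zero) then 1 else 0)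
  + 2 * (if w.1 = one ∧ lowQ w.2.1 ∧ lowQ w.2.2.1 ∧ lowQ w.2.2.2 ∧
      ¬(w.2.1 = zero ∧ w.2.2.1 = zero ∧ w.2.2.2 = zero) then 1 else 0)
  - (if w.1 = one ∧ w.2.1 = zero ∧ w.2.2.1 = zero ∧ w.2.2.2 = quest then 1 else 0)
  + (if w.2.1 = one ∧ w.2.2.1 = quest then 1 else 0)
  + 2 * (if w.1 = one ∧ w.2.1 = quest ∧ w.2.2.1 = zero ∧ w.2.2.2 = one then 1 else 0)
  + (if w.1 = one ∧ w.2.1 = quest ∧ w.2.2.1 = quest ∧ w.2.2.2 = one then 1 else 0)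

lemma hZ : ∀ w : W, gZ w + gZ (revW w) ≤ fZ w + fZ (revW w) := by decide

lemma symmKey (q : W → ℝ) (hq0 : ∀ w, 0 ≤ q w) (hqs : ∀ w, q (revW w) = q w) :
    ∑ w : W, (gZ w : ℝ) * q w ≤ ∑ w : W, (fZ w : ℝ) * q w := by
  have hre : ∀ h : W → ℝ, ∑ w : W, h (revW w) = ∑ w : W, h w :=
    fun h => Fintype.sum_equiv revW_inv.toPerm _ _ (fun w => rfl)
  have hg2 : ∑ w : W, (gZ w : ℝ) * q w
      = (∑ w : W, ((gZ w + gZ (revW w) : ℤ) : ℝ) * q w) / 2 := by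
    have := hre (fun w => (gZ w : ℝ) * q w)
    rw [eq_div_iff (by norm_num : (2:ℝ) ≠ 0)]
    symm
    calc (∑ w : W, ((gZ w + gZ (revW w) : ℤ) : ℝ) * q w)
        = ∑ w : W, ((gZ w : ℝ) * q w + (gZ (revW w) : ℝ) * q (revW w)) := by
          refine Finset.sum_congr rfl fun w _ => ?_
          rw [hqs w]; push_cast; ring
      _ = ∑ w : W, (gZ w : ℝ) * q w + ∑ w : W, (gZ (revW w) : ℝ) * q (revW w) :=
          Finset.sum_add_distrib
      _ = (∑ w : W, (gZ w : ℝ) * q w) * 2 := by rw [this]; ring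
  have hf2 : ∑ w : W, (fZ w : ℝ) * q w
      = (∑ w : W, ((fZ w + fZ (revW w) : ℤ) : ℝ) * q w) / 2 := by
    have := hre (fun w => (fZ w : ℝ) * q w)
    rw [eq_div_iff (by norm_num : (2:ℝ) ≠ 0)]
    symm
    calc (∑ w : W, ((fZ w + fZ (revW w) : ℤ) : ℝ) * q w)
        = ∑ w : W, ((fZ w : ℝ) * q w + (fZ (revW w) : ℝ) * q (revW w)) := by
          refine Finset.sum_congr rfl fun w _ => ?_
          rw [hqs w]; push_cast; ring
      _ = ∑ w : W, (fZ w : ℝ) * q w + ∑ w : W, (fZ (revW w) : ℝ) * q (revW w) :=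
          Finset.sum_add_distrib
      _ = (∑ w : W, (fZ w : ℝ) * q w) * 2 := by rw [this]; ring
  rw [hg2, hf2]
  apply div_le_div_of_nonneg_right ?_ (by norm_num)
  refine Finset.sum_le_sum fun w _ => mul_le_mul_of_nonneg_right ?_ (hq0 w)
  exact_mod_cast hZ w

theorem stmt10 (μ : Measure Config) [IsProbabilityMeasure μ]
    (hshift : ∀ k : ℤ, Measure.map (shiftBy k) μ = μ)
    (hrefl : Measure.map reflect μ = μ) :
    (μ {η | η 0 = quest}).toReal + (μ {η | η 0 = zero ∧ η 1 = quest}).toReal +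
        (μ {η | η 0 = zero ∧ η 1 = zero ∧ η 2 = quest}).toReal ≥
      (μ {η | lowQ (η 0) ∧ star3 η 1}).toReal +
        2 * (μ {η | η 0 = one ∧ star3 η 1}).toReal -
        (μ {η | η 0 = one ∧ η 1 = zero ∧ η 2 = zero ∧ η 3 = quest}).toReal +
        (μ {η | η 0 = one ∧ η 1 = quest}).toReal +
        2 * (μ {η | η 0 = one ∧ η 1 = quest ∧ η 2 = zero ∧ η 3 = one}).toReal +
        (μ {η | η 0 = one ∧ η 1 = quest ∧ η 2 = quest ∧ η 3 = one}).toReal := by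
  have hmshift : ∀ k : ℤ, Measurable (shiftBy k) :=
    fun k => measurable_pi_lambda _ (fun n => measurable_pi_apply _)
  have hmrefl : Measurable reflect :=
    measurable_pi_lambda _ (fun n => measurable_pi_apply _)
  -- shift invariance applied to sets
  have hsh : ∀ (k : ℤ) (Q : W → Prop),
      μ {η : Config | Q (η 0, η 1, η 2, η 3)} = μ (shiftBy k ⁻¹' {η : Config | Q (η 0, η 1, η 2, η 3)}) := by
    intro k Q
    conv_lhs => rw [← hshift k]
    exact Measure.map_apply (hmshift k) (measSet Q)
  -- reflection symmetry for cylinders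
  have hsym : ∀ w : W, μ (cyl (revW w)) = μ (cyl w) := by
    intro w
    have hg : Measurable (shiftBy (-3) ∘ reflect) := (hmshift (-3)).comp hmrefl
    have hmap : Measure.map (shiftBy (-3) ∘ reflect) μ = μ := by
      rw [← Measure.map_map (hmshift (-3)) hmrefl, hrefl, hshift (-3)]
    have hpre : (shiftBy (-3) ∘ reflect) ⁻¹' (cyl w) = cyl (revW w) := by
      ext η
      simp only [cyl, revW, Set.mem_preimage, Set.mem_setOf_eq, Function.comp, shiftBy, reflect]
      norm_num
      tauto
    conv_rhs => rw [← hmap]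
    rw [Measure.map_apply hg (meas_cyl w), hpre]
  set q : W → ℝ := fun w => (μ (cyl w)).toReal with hq
  have hq0 : ∀ w, 0 ≤ q w := fun w => ENNReal.toReal_nonneg
  have hqs : ∀ w, q (revW w) = q w := fun w => congrArg ENNReal.toReal (hsym w)
  -- the nine events, rewritten as cylinder sums
  have h1 : (μ {η : Config | η 0 = quest}).toReal
      = ∑ w : W, if w.2.1 = quest then q w else 0 := by
    rw [hsh 1 (fun w => w.1 = quest), show shiftBy 1 ⁻¹' {η : Config | η 0 = quest}
        = {η : Config | η 1 = quest} from by ext η; simp only [Set.mem_preimage, Set.mem_setOf_eq, shiftBy]; norm_num]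
    exact meas_decomp μ (fun w => w.2.1 = quest)
  have h2 : (μ {η : Config | η 0 = zero ∧ η 1 = quest}).toReal
      = ∑ w : W, if w.2.1 = zero ∧ w.2.2.1 = quest then q w else 0 := by
    rw [hsh 1 (fun w => w.1 = zero ∧ w.2.1 = quest),
      show shiftBy 1 ⁻¹' {η : Config | η 0 = zero ∧ η 1 = quest}
        = {η : Config | η 1 = zero ∧ η 2 = quest} from by
          ext η; simp only [Set.mem_preimage, Set.mem_setOf_eq, shiftBy]; norm_num]
    exact meas_decomp μ (fun w => w.2.1 = zero ∧ w.2.2.1 = quest)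
  have h3 : (μ {η : Config | η 0 = zero ∧ η 1 = zero ∧ η 2 = quest}).toReal
      = ∑ w : W, if w.2.1 = zero ∧ w.2.2.1 = zero ∧ w.2.2.2 = quest then q w else 0 := by
    rw [hsh 1 (fun w => w.1 = zero ∧ w.2.1 = zero ∧ w.2.2.1 = quest),
      show shiftBy 1 ⁻¹' {η : Config | η 0 = zero ∧ η 1 = zero ∧ η 2 = quest}
        = {η : Config | η 1 = zero ∧ η 2 = zero ∧ η 3 = quest} from by
          ext η; simp only [Set.mem_preimage, Set.mem_setOf_eq, shiftBy]; norm_num]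
    exact meas_decomp μ (fun w => w.2.1 = zero ∧ w.2.2.1 = zero ∧ w.2.2.2 = quest)
  have h4 : (μ {η : Config | lowQ (η 0) ∧ star3 η 1}).toReal
      = ∑ w : W, if lowQ w.1 ∧ lowQ w.2.1 ∧ lowQ w.2.2.1 ∧ lowQ w.2.2.2 ∧
          ¬(w.2.1 = zero ∧ w.2.2.1 = zero ∧ w.2.2.2 = zero) then q w else 0 := by
    rw [show {η : Config | lowQ (η 0) ∧ star3 η 1}
        = {η : Config | lowQ (η 0) ∧ lowQ (η 1) ∧ lowQ (η 2) ∧ lowQ (η 3) ∧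
            ¬(η 1 = zero ∧ η 2 = zero ∧ η 3 = zero)} from by
          ext η; simp only [Set.mem_setOf_eq, star3]; norm_num]
    exact meas_decomp μ (fun w => lowQ w.1 ∧ lowQ w.2.1 ∧ lowQ w.2.2.1 ∧ lowQ w.2.2.2 ∧
      ¬(w.2.1 = zero ∧ w.2.2.1 = zero ∧ w.2.2.2 = zero))
  have h5 : (μ {η : Config | η 0 = one ∧ star3 η 1}).toReal
      = ∑ w : W, if w.1 = one ∧ lowQ w.2.1 ∧ lowQ w.2.2.1 ∧ lowQ w.2.2.2 ∧
          ¬(w.2.1 = zero ∧ w.2.2.1 = zero ∧ w.2.2.2 = zero) then q w else 0 := by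
    rw [show {η : Config | η 0 = one ∧ star3 η 1}
        = {η : Config | η 0 = one ∧ lowQ (η 1) ∧ lowQ (η 2) ∧ lowQ (η 3) ∧
            ¬(η 1 = zero ∧ η 2 = zero ∧ η 3 = zero)} from by
          ext η; simp only [Set.mem_setOf_eq, star3]; norm_num]
    exact meas_decomp μ (fun w => w.1 = one ∧ lowQ w.2.1 ∧ lowQ w.2.2.1 ∧ lowQ w.2.2.2 ∧
      ¬(w.2.1 = zero ∧ w.2.2.1 = zero ∧ w.2.2.2 = zero))
  have h6 : (μ {η : Config | η 0 = one ∧ η 1 = zero ∧ η 2 = zero ∧ η 3 = quest}).toReal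
      = ∑ w : W, if w.1 = one ∧ w.2.1 = zero ∧ w.2.2.1 = zero ∧ w.2.2.2 = quest then q w else 0 :=
    meas_decomp μ (fun w => w.1 = one ∧ w.2.1 = zero ∧ w.2.2.1 = zero ∧ w.2.2.2 = quest)
  have h7 : (μ {η : Config | η 0 = one ∧ η 1 = quest}).toReal
      = ∑ w : W, if w.2.1 = one ∧ w.2.2.1 = quest then q w else 0 := by
    rw [hsh 1 (fun w => w.1 = one ∧ w.2.1 = quest),
      show shiftBy 1 ⁻¹' {η : Config | η 0 = one ∧ η 1 = quest}
        = {η : Config | η 1 = one ∧ η 2 = quest} from by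
          ext η; simp only [Set.mem_preimage, Set.mem_setOf_eq, shiftBy]; norm_num]
    exact meas_decomp μ (fun w => w.2.1 = one ∧ w.2.2.1 = quest)
  have h8 : (μ {η : Config | η 0 = one ∧ η 1 = quest ∧ η 2 = zero ∧ η 3 = one}).toReal
      = ∑ w : W, if w.1 = one ∧ w.2.1 = quest ∧ w.2.2.1 = zero ∧ w.2.2.2 = one then q w else 0 :=
    meas_decomp μ (fun w => w.1 = one ∧ w.2.1 = quest ∧ w.2.2.1 = zero ∧ w.2.2.2 = one)
  have h9 : (μ {η : Config | η 0 = one ∧ η 1 = quest ∧ η 2 = quest ∧ η 3 = one}).toReal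
      = ∑ w : W, if w.1 = one ∧ w.2.1 = quest ∧ w.2.2.1 = quest ∧ w.2.2.2 = one then q w else 0 :=
    meas_decomp μ (fun w => w.1 = one ∧ w.2.1 = quest ∧ w.2.2.1 = quest ∧ w.2.2.2 = one)
  rw [ge_iff_le, h1, h2, h3, h4, h5, h6, h7, h8, h9]
  have key := symmKey q hq0 hqs
  have hF : ∑ w : W, (fZ w : ℝ) * q w
      = (∑ w : W, if w.2.1 = quest then q w else 0)
        + (∑ w : W, if w.2.1 = zero ∧ w.2.2.1 = quest then q w else 0)
        + (∑ w : W, if w.2.1 = zero ∧ w.2.2.1 = zero ∧ w.2.2.2 = quest then q w else 0) := by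
    rw [← Finset.sum_add_distrib, ← Finset.sum_add_distrib]
    refine Finset.sum_congr rfl fun w _ => ?_
    simp only [fZ]
    split_ifs <;> push_cast <;> ring
  have hG : ∑ w : W, (gZ w : ℝ) * q w
      = (∑ w : W, if lowQ w.1 ∧ lowQ w.2.1 ∧ lowQ w.2.2.1 ∧ lowQ w.2.2.2 ∧
            ¬(w.2.1 = zero ∧ w.2.2.1 = zero ∧ w.2.2.2 = zero) then q w else 0)
        + 2 * (∑ w : W, if w.1 = one ∧ lowQ w.2.1 ∧ lowQ w.2.2.1 ∧ lowQ w.2.2.2 ∧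
            ¬(w.2.1 = zero ∧ w.2.2.1 = zero ∧ w.2.2.2 = zero) then q w else 0)
        - (∑ w : W, if w.1 = one ∧ w.2.1 = zero ∧ w.2.2.1 = zero ∧ w.2.2.2 = quest then q w else 0)
        + (∑ w : W, if w.2.1 = one ∧ w.2.2.1 = quest then q w else 0)
        + 2 * (∑ w : W, if w.1 = one ∧ w.2.1 = quest ∧ w.2.2.1 = zero ∧ w.2.2.2 = one then q w else 0)
        + (∑ w : W, if w.1 = one ∧ w.2.1 = quest ∧ w.2.2.1 = quest ∧ w.2.2.2 = one then q w else 0) := by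
    rw [Finset.mul_sum, Finset.mul_sum, ← Finset.sum_add_distrib, ← Finset.sum_sub_distrib,
      ← Finset.sum_add_distrib, ← Finset.sum_add_distrib, ← Finset.sum_add_distrib]
    refine Finset.sum_congr rfl fun w _ => ?_
    simp only [gZ]
    split_ifs <;> push_cast <;> ring
  linarith [key, hF, hG]
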